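/- Let Ω ⊆ 𝕆 be a domain, D_Ω the quotient of Ω̂ = {(z,I) ∈ ℂ×𝕊 : τ_I(z) ∈ Ω} by CCL-equivalence, and P : D_Ω → ℂ the map [(z,I)] ↦ z. Then P is well-defined and a local homeomorphism, i.e., (D_Ω, P) is a Riemann domain over ℂ. -/

import Mathlib

noncomputable section

/-- The octonions, realized as the Cayley–Dickson double of the quaternions. -/
@[ext] structure Octonion : Type where
  a : Quaternion ℝ
  b : Quaternion ℝ

notation "𝕆" => Octonion

namespace Octonion

instance : Zero 𝕆 := ⟨⟨0, 0⟩⟩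
instance : One 𝕆 := ⟨⟨1, 0⟩⟩
instance : Add 𝕆 := ⟨fun x y => ⟨x.a + y.a, x.b + y.b⟩⟩
instance : Neg 𝕆 := ⟨fun x => ⟨-x.a, -x.b⟩⟩
instance : Sub 𝕆 := ⟨fun x y => ⟨x.a - y.a, x.b - y.b⟩⟩
/-- Cayley–Dickson multiplication. -/
instance : Mul 𝕆 := ⟨fun x y => ⟨x.a * y.a - star y.b * x.b, y.b * x.a + x.b * star y.a⟩⟩
instance : SMul ℝ 𝕆 := ⟨fun r x => ⟨r • x.a, r • x.b⟩⟩
instance : SMul ℕ 𝕆 := ⟨fun n x => ⟨n • x.a, n • x.b⟩⟩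
instance : SMul ℤ 𝕆 := ⟨fun n x => ⟨n • x.a, n • x.b⟩⟩

def toProd (x : 𝕆) : Quaternion ℝ × Quaternion ℝ := (x.a, x.b)

lemma toProd_injective : Function.Injective toProd := by
  intro x y h
  cases x; cases y
  simpa [toProd, Prod.ext_iff, Octonion.mk.injEq] using h

instance : AddCommGroup 𝕆 :=
  Function.Injective.addCommGroup toProd toProd_injective rfl (fun _ _ => rfl) (fun _ => rfl)
    (fun _ _ => rfl) (fun _ _ => rfl) (fun _ _ => rfl)

def toProdHom : 𝕆 →+ Quaternion ℝ × Quaternion ℝ :=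
  { toFun := toProd, map_zero' := rfl, map_add' := fun _ _ => rfl }

instance : Module ℝ 𝕆 :=
  Function.Injective.module ℝ toProdHom toProd_injective (fun _ _ => rfl)

def toProdLin : 𝕆 →ₗ[ℝ] Quaternion ℝ × Quaternion ℝ :=
  { toFun := toProd, map_add' := fun _ _ => rfl, map_smul' := fun _ _ => rfl }

instance : NormedAddCommGroup 𝕆 := NormedAddCommGroup.induced 𝕆 _ toProdHom toProd_injective
instance : NormedSpace ℝ 𝕆 := NormedSpace.induced ℝ 𝕆 _ toProdLin

/-- Octonionic conjugation. -/
def conj (x : 𝕆) : 𝕆 := ⟨star x.a, -x.b⟩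

/-- The real part of an octonion. -/
def re (x : 𝕆) : ℝ := x.a.re

/-- The imaginary part of an octonion. -/
def im (x : 𝕆) : 𝕆 := ⟨x.a.im, x.b⟩

/-- The squared (Euclidean) norm of an octonion. -/
def normSq (x : 𝕆) : ℝ := Quaternion.normSq x.a + Quaternion.normSq x.b

/-- The (Euclidean) norm of an octonion. -/
def onorm (x : 𝕆) : ℝ := Real.sqrt (normSq x)

instance : Inv 𝕆 := ⟨fun x => (normSq x)⁻¹ • conj x⟩

/-- The sphere of imaginary units of `𝕆`. -/
def sph : Set 𝕆 := {I | onorm I = 1 ∧ re I = 0}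

/-- `tau I (α + β i) = α + β I`. -/
def tau (I : 𝕆) (z : ℂ) : 𝕆 := z.re • (1 : 𝕆) + z.im • I

end Octonion

namespace Octonion

/-- `γ` and `Θ` define a circular lifting `t ↦ τ_{Θ t}(γ t)`: `γ` is a continuous path in `ℂ`
(the base) and `Θ` a continuous path in the sphere of imaginary units (the spherical
coordinate). -/
def IsCircularLifting (γ : unitInterval → ℂ) (Θ : unitInterval → 𝕆) : Prop :=
  Continuous γ ∧ Continuous Θ ∧ ∀ t, Θ t ∈ sph

/-- `x` and `x'` are CCL-connected in `Ω`: they are the terminal points of a pair of coupled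
circular liftings contained in `Ω` (common base, same initial spherical coordinate). -/
def CCLConnected (Ω : Set 𝕆) (x x' : 𝕆) : Prop :=
  ∃ γ Θ₁ Θ₂, IsCircularLifting γ Θ₁ ∧ IsCircularLifting γ Θ₂ ∧ Θ₁ 0 = Θ₂ 0 ∧
    (∀ t, tau (Θ₁ t) (γ t) ∈ Ω) ∧ (∀ t, tau (Θ₂ t) (γ t) ∈ Ω) ∧
    tau (Θ₁ 1) (γ 1) = x ∧ tau (Θ₂ 1) (γ 1) = x'

/-- CCL-equivalence in `Ω`: the equivalence closure of CCL-connectedness (finite chains). -/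
def CCLEquiv (Ω : Set 𝕆) : 𝕆 → 𝕆 → Prop := Relation.EqvGen (CCLConnected Ω)

end Octonion

namespace Octonion

/-- The disjoint union `Ω̂` of the complex slices of `Ω`, topologized as a disjoint union
(a set is open iff it is a union `⋃_I O^I × {I}` with each `O^I` open in `Ω^I`). -/
abbrev OHat (Ω : Set 𝕆) : Type := Σ I : sph, {z : ℂ // tau I.1 z ∈ Ω}

/-- The CCL equivalence relation on `Ω̂`: `(z,I) ≃ (z',I')` iff `z = z'` and `τ_I z`,
`τ_{I'} z'` are CCL-equivalent in `Ω`. -/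
def ohatSetoid (Ω : Set 𝕆) : Setoid (OHat Ω) where
  r p q := p.2.1 = q.2.1 ∧ CCLEquiv Ω (tau p.1.1 p.2.1) (tau q.1.1 q.2.1)
  iseqv := ⟨fun p => ⟨rfl, Relation.EqvGen.refl _⟩,
    fun h => ⟨h.1.symm, Relation.EqvGen.symm _ _ h.2⟩,
    fun h h' => ⟨h.1.trans h'.1, Relation.EqvGen.trans _ _ _ h.2 h'.2⟩⟩

/-- The quotient `D_Ω` of `Ω̂` by CCL equivalence, with the quotient topology. -/
abbrev DOmega (Ω : Set 𝕆) : Type := Quotient (ohatSetoid Ω)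

end Octonion

namespace Octonion

@[simp] lemma add_a (x y : 𝕆) : (x + y).a = x.a + y.a := rfl
@[simp] lemma add_b (x y : 𝕆) : (x + y).b = x.b + y.b := rfl
@[simp] lemma neg_a (x : 𝕆) : (-x).a = -x.a := rfl
@[simp] lemma neg_b (x : 𝕆) : (-x).b = -x.b := rfl
@[simp] lemma smul_a (r : ℝ) (x : 𝕆) : (r • x).a = r • x.a := rfl
@[simp] lemma smul_b (r : ℝ) (x : 𝕆) : (r • x).b = r • x.b := rfl
@[simp] lemma one_a : (1 : 𝕆).a = 1 := rfl
@[simp] lemma one_b : (1 : 𝕆).b = 0 := rfl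
@[simp] lemma zero_a : (0 : 𝕆).a = 0 := rfl
@[simp] lemma zero_b : (0 : 𝕆).b = 0 := rfl

@[simp] lemma re_add (x y : 𝕆) : re (x + y) = re x + re y := by simp [re]
@[simp] lemma re_smul (r : ℝ) (x : 𝕆) : re (r • x) = r * re x := by
  simp [re, Quaternion.re_smul, smul_eq_mul]
@[simp] lemma re_one : re (1 : 𝕆) = 1 := rfl
@[simp] lemma re_neg (x : 𝕆) : re (-x) = - re x := by simp [re]
@[simp] lemma re_zero : re (0 : 𝕆) = 0 := by simp [re, Quaternion.re_zero]

@[simp] lemma im_add (x y : 𝕆) : im (x + y) = im x + im y := by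
  simp [im, Octonion.ext_iff]
@[simp] lemma im_smul (r : ℝ) (x : 𝕆) : im (r • x) = r • im x := by
  simp [im, Octonion.ext_iff, Quaternion.im_smul]
@[simp] lemma im_one : im (1 : 𝕆) = 0 := by simp [im, Octonion.ext_iff, Quaternion.im_one]
@[simp] lemma im_neg (x : 𝕆) : im (-x) = - im x := by simp [im, Octonion.ext_iff]
@[simp] lemma re_im (x : 𝕆) : re (im x) = 0 := by simp [re, im]

lemma im_of_re_zero {x : 𝕆} (h : re x = 0) : im x = x := by
  have hx : x.a.re = 0 := h
  have := x.a.re_add_im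
  rw [hx] at this
  simp only [Quaternion.coe_zero, zero_add] at this
  simp [im, Octonion.ext_iff, this]

lemma smul_cancel {c : ℝ} (hc : c ≠ 0) {x y : 𝕆} (h : c • x = c • y) : x = y := by
  have := congrArg (fun v => c⁻¹ • v) h
  simpa [smul_smul, inv_mul_cancel₀ hc] using this

lemma re_smul_one_add_im (x : 𝕆) : re x • (1 : 𝕆) + im x = x := by
  apply Octonion.ext
  · show x.a.re • (1 : Quaternion ℝ) + x.a.im = x.a
    apply Quaternion.ext <;> simp [Quaternion.re_one, Quaternion.imI_one, Quaternion.imJ_one, Quaternion.imK_one]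
  · show x.a.re • (0 : Quaternion ℝ) + x.b = x.b
    simp

lemma normSq_nonneg (x : 𝕆) : 0 ≤ normSq x :=
  add_nonneg (Quaternion.normSq_nonneg) (Quaternion.normSq_nonneg)

lemma normSq_eq_zero {x : 𝕆} : normSq x = 0 ↔ x = 0 := by
  unfold normSq
  rw [add_eq_zero_iff_of_nonneg Quaternion.normSq_nonneg Quaternion.normSq_nonneg]
  simp [Quaternion.normSq_eq_zero, Octonion.ext_iff]

lemma normSq_smul (r : ℝ) (x : 𝕆) : normSq (r • x) = r ^ 2 * normSq x := by
  simp [normSq, Quaternion.normSq_smul, mul_add]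

lemma normSq_neg (x : 𝕆) : normSq (-x) = normSq x := by
  simp [normSq]

lemma onorm_nonneg (x : 𝕆) : 0 ≤ onorm x := Real.sqrt_nonneg _

lemma onorm_eq_zero {x : 𝕆} : onorm x = 0 ↔ x = 0 := by
  rw [onorm, Real.sqrt_eq_zero (normSq_nonneg x), normSq_eq_zero]

lemma onorm_smul (r : ℝ) (x : 𝕆) : onorm (r • x) = |r| * onorm x := by
  rw [onorm, normSq_smul, Real.sqrt_mul (sq_nonneg r), Real.sqrt_sq_eq_abs, onorm]

lemma onorm_neg (x : 𝕆) : onorm (-x) = onorm x := by rw [onorm, normSq_neg, onorm]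

lemma onorm_pos {x : 𝕆} (h : x ≠ 0) : 0 < onorm x :=
  lt_of_le_of_ne (onorm_nonneg x) (fun h' => h (onorm_eq_zero.mp h'.symm))

lemma neg_mem_sph {I : 𝕆} (hI : I ∈ sph) : -I ∈ sph :=
  ⟨by rw [onorm_neg]; exact hI.1, by rw [re_neg, hI.2, neg_zero]⟩

lemma sph_ne_zero {I : 𝕆} (hI : I ∈ sph) : I ≠ 0 := by
  intro h
  have h1 := hI.1
  rw [h, onorm_eq_zero.mpr rfl] at h1
  exact zero_ne_one h1

/-! ### tau lemmas -/

lemma re_tau {I : 𝕆} (hI : I ∈ sph) (z : ℂ) : re (tau I z) = z.re := by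
  simp [tau, hI.2]

lemma im_tau {I : 𝕆} (hI : I ∈ sph) (z : ℂ) : im (tau I z) = z.im • I := by
  simp [tau, im_of_re_zero hI.2]

lemma tau_of_im_zero {z : ℂ} (h : z.im = 0) (I I' : 𝕆) : tau I z = tau I' z := by
  simp [tau, h]

lemma tau_neg_conj (I : 𝕆) (z : ℂ) : tau (-I) ((starRingEnd ℂ) z) = tau I z := by
  simp [tau, smul_neg, neg_smul]

lemma continuous_tau (I : 𝕆) : Continuous (tau I) :=
  (Complex.continuous_re.smul continuous_const).add
    (Complex.continuous_im.smul continuous_const)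

lemma isometry_toProd : Isometry toProd := Isometry.of_dist_eq fun _ _ => rfl

lemma continuous_a : Continuous (fun x : 𝕆 => x.a) :=
  continuous_fst.comp isometry_toProd.continuous

lemma continuous_b : Continuous (fun x : 𝕆 => x.b) :=
  continuous_snd.comp isometry_toProd.continuous

lemma continuous_normSq : Continuous normSq :=
  (Quaternion.continuous_normSq.comp continuous_a).add
    (Quaternion.continuous_normSq.comp continuous_b)

lemma continuous_onorm : Continuous onorm :=
  Real.continuous_sqrt.comp continuous_normSq

/-! ### representation analysis -/

lemma tau_eq_re' {A J : 𝕆} (hA : A ∈ sph) (hJ : J ∈ sph) {u z : ℂ}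
    (h : tau A u = tau J z) : u.re = z.re := by
  have := congrArg re h
  rwa [re_tau hA, re_tau hJ] at this

lemma tau_eq_im' {A J : 𝕆} (hA : A ∈ sph) (hJ : J ∈ sph) {u z : ℂ}
    (h : tau A u = tau J z) : u.im • A = z.im • J := by
  have := congrArg im h
  rwa [im_tau hA, im_tau hJ] at this

lemma tau_eq_abs' {A J : 𝕆} (hA : A ∈ sph) (hJ : J ∈ sph) {u z : ℂ}
    (h : tau A u = tau J z) : |u.im| = |z.im| := by
  have := congrArg onorm (tau_eq_im' hA hJ h)
  rwa [onorm_smul, onorm_smul, hA.1, hJ.1, mul_one, mul_one] at this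

end Octonion

namespace Octonion

/-! ### path-connectedness of the sphere of units -/

def oi : 𝕆 := ⟨⟨0,1,0,0⟩, 0⟩
def oj : 𝕆 := ⟨⟨0,0,1,0⟩, 0⟩
def ok : 𝕆 := ⟨⟨0,0,0,1⟩, 0⟩

lemma oi_mem : oi ∈ sph := by
  constructor
  · show Real.sqrt (normSq oi) = 1
    have : normSq oi = 1 := by
      have h := Quaternion.normSq_def' (R := ℝ) ⟨0,1,0,0⟩
      simp [oi, normSq, h]
    rw [this, Real.sqrt_one]
  · rfl

lemma oj_mem : oj ∈ sph := by
  constructor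
  · show Real.sqrt (normSq oj) = 1
    have : normSq oj = 1 := by
      have h := Quaternion.normSq_def' (R := ℝ) ⟨0,0,1,0⟩
      simp [oj, normSq, h]
    rw [this, Real.sqrt_one]
  · rfl

lemma ok_mem : ok ∈ sph := by
  constructor
  · show Real.sqrt (normSq ok) = 1
    have : normSq ok = 1 := by
      have h := Quaternion.normSq_def' (R := ℝ) ⟨0,0,0,1⟩
      simp [ok, normSq, h]
    rw [this, Real.sqrt_one]
  · rfl

lemma oi_ne_oj : oi ≠ oj := by
  intro h
  have := congrArg (fun x : 𝕆 => x.a.imI) h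
  simp [oi, oj] at this

lemma oi_ne_ok : oi ≠ ok := by
  intro h
  have := congrArg (fun x : 𝕆 => x.a.imI) h
  simp [oi, ok] at this

lemma oj_ne_ok : oj ≠ ok := by
  intro h
  have := congrArg (fun x : 𝕆 => x.a.imJ) h
  simp [oj, ok] at this

lemma joinedIn_sph_of_add_ne {A B : 𝕆} (hA : A ∈ sph) (hB : B ∈ sph)
    (hAB : A + B ≠ 0) : JoinedIn sph A B := by
  set c : ℝ → 𝕆 := fun t => (1 - t) • A + t • B with hc
  have hcont : Continuous c := by
    exact ((continuous_const.sub continuous_id).smul continuous_const).add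
      (continuous_id.smul continuous_const)
  have hne : ∀ t : ℝ, t ∈ Set.Icc (0:ℝ) 1 → c t ≠ 0 := by
    intro t ht h0
    have habs : |1 - t| * onorm A = |t| * onorm B := by
      have h1 : (1 - t) • A = -(t • B) := by
        rw [eq_neg_iff_add_eq_zero]; exact h0
      have := congrArg onorm h1
      rwa [onorm_smul, onorm_neg, onorm_smul] at this
    rw [hA.1, hB.1, mul_one, mul_one,
      abs_of_nonneg (by linarith [ht.2]), abs_of_nonneg ht.1] at habs
    have ht2 : t = 1/2 := by linarith
    apply hAB
    have : c t = (1/2 : ℝ) • (A + B) := by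
      rw [hc]; simp only [ht2]; rw [smul_add]; norm_num
    rw [this] at h0
    have h2 := congrArg (fun v => (2:ℝ) • v) h0
    simp only [smul_smul, smul_zero] at h2
    norm_num at h2
    exact h2
  have hne' : ∀ t : unitInterval, onorm (c t) ≠ 0 := by
    intro t h
    exact hne t ⟨t.2.1, t.2.2⟩ (onorm_eq_zero.mp h)
  have hcont' : Continuous fun t : unitInterval => c (t : ℝ) :=
    hcont.comp continuous_subtype_val
  set p : unitInterval → 𝕆 := fun t => (onorm (c t))⁻¹ • c t with hp
  have hmem : ∀ t : unitInterval, p t ∈ sph := by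
    intro t
    constructor
    · rw [hp]; simp only
      rw [onorm_smul, abs_of_nonneg (inv_nonneg.mpr (onorm_nonneg _)),
        inv_mul_cancel₀ (hne' t)]
    · rw [hp]; simp only
      rw [re_smul]
      have : re (c t) = 0 := by
        rw [hc]; simp only [re_add, re_smul, hA.2, hB.2, mul_zero, add_zero]
      rw [this, mul_zero]
  have hp0 : p 0 = A := by
    have hc0 : c ((0 : unitInterval) : ℝ) = A := by
      rw [hc]; simp
    rw [hp]; simp only [hc0, hA.1, inv_one, one_smul]
  have hp1 : p 1 = B := by
    have hc1 : c ((1 : unitInterval) : ℝ) = B := by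
      rw [hc]; simp
    rw [hp]; simp only [hc1, hB.1, inv_one, one_smul]
  have hpc : Continuous p :=
    ((continuous_onorm.comp hcont').inv₀ hne').smul hcont'
  exact ⟨⟨⟨p, hpc⟩, hp0, hp1⟩, fun t => hmem t⟩

lemma joinedIn_sph {A B : 𝕆} (hA : A ∈ sph) (hB : B ∈ sph) : JoinedIn sph A B := by
  have key : ∀ K, K ∈ sph → K ≠ -A → K ≠ -B → JoinedIn sph A B := by
    intro K hK h1 h2
    have hAK : A + K ≠ 0 := fun h => h1 (eq_neg_of_add_eq_zero_right h)
    have hKB : K + B ≠ 0 := fun h => h2 (eq_neg_of_add_eq_zero_left h)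
    exact (joinedIn_sph_of_add_ne hA hK hAK).trans (joinedIn_sph_of_add_ne hK hB hKB)
  by_cases hi : oi = -A ∨ oi = -B
  · by_cases hj : oj = -A ∨ oj = -B
    · rcases hi with hi | hi <;> rcases hj with hj | hj
      · exact absurd (hi.trans hj.symm) oi_ne_oj
      · exact key ok ok_mem (fun h => oi_ne_ok (hi.trans h.symm))
          (fun h => oj_ne_ok (hj.trans h.symm))
      · exact key ok ok_mem (fun h => oj_ne_ok (hj.trans h.symm))
          (fun h => oi_ne_ok (hi.trans h.symm))
      · exact absurd (hi.trans hj.symm) oi_ne_oj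
    · push_neg at hj
      exact key oj oj_mem hj.1 hj.2
  · push_neg at hi
    exact key oi oi_mem hi.1 hi.2

/-! ### path helpers -/

/-- a continuous map on the interval as a `Path`. -/
def pathOf {X : Type*} [TopologicalSpace X] (f : unitInterval → X) (hf : Continuous f) :
    Path (f 0) (f 1) := ⟨⟨f, hf⟩, rfl, rfl⟩

/-- straight segment path in `ℂ`. -/
def seg (z w : ℂ) : Path z w where
  toFun := fun t => z + (t : ℝ) • (w - z)
  continuous_toFun := by
    exact continuous_const.add ((continuous_subtype_val).smul continuous_const)
  source' := by simp
  target' := by simp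

lemma seg_mem_ball {z w : ℂ} {ε : ℝ} (hw : w ∈ Metric.ball z ε) (t : unitInterval) :
    seg z w t ∈ Metric.ball z ε := by
  have : dist (seg z w t) z = (t : ℝ) * dist w z := by
    simp only [seg, Path.coe_mk_mk, dist_eq_norm]
    rw [add_sub_cancel_left, norm_smul, Real.norm_eq_abs, abs_of_nonneg t.2.1]
  rw [Metric.mem_ball, this]
  calc (t : ℝ) * dist w z ≤ 1 * dist w z := by
        apply mul_le_mul_of_nonneg_right t.2.2 dist_nonneg
    _ = dist w z := one_mul _
    _ < ε := hw

lemma trans_pair {x₀ x₁ x₂ : ℂ} {J₀ J₁ J₂ : 𝕆} (γ₁ : Path x₀ x₁) (γ₂ : Path x₁ x₂)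
    (Θ₁ : Path J₀ J₁) (Θ₂ : Path J₁ J₂) (Pr : ℂ → 𝕆 → Prop)
    (h1 : ∀ t, Pr (γ₁ t) (Θ₁ t)) (h2 : ∀ t, Pr (γ₂ t) (Θ₂ t)) :
    ∀ t, Pr ((γ₁.trans γ₂) t) ((Θ₁.trans Θ₂) t) := by
  intro t
  rw [Path.trans_apply, Path.trans_apply]
  split_ifs with h
  · exact h1 _
  · exact h2 _

end Octonion

namespace Octonion

variable {Ω : Set 𝕆}

/-! ### the extension and real-point lemmas -/

lemma extend_lemma (hΩo : IsOpen Ω) {γ : unitInterval → ℂ} {Θ₁ Θ₂ : unitInterval → 𝕆}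
    (h₁ : IsCircularLifting γ Θ₁) (h₂ : IsCircularLifting γ Θ₂) (h0 : Θ₁ 0 = Θ₂ 0)
    (hm₁ : ∀ t, tau (Θ₁ t) (γ t) ∈ Ω) (hm₂ : ∀ t, tau (Θ₂ t) (γ t) ∈ Ω) :
    ∃ ε > 0, ∀ w ∈ Metric.ball (γ 1) ε,
      tau (Θ₁ 1) w ∈ Ω ∧ tau (Θ₂ 1) w ∈ Ω ∧
        CCLConnected Ω (tau (Θ₁ 1) w) (tau (Θ₂ 1) w) := by
  obtain ⟨hγc, hΘ₁c, hΘ₁s⟩ := h₁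
  obtain ⟨-, hΘ₂c, hΘ₂s⟩ := h₂
  have hA : IsOpen {z : ℂ | tau (Θ₁ 1) z ∈ Ω} := hΩo.preimage (continuous_tau _)
  have hB : IsOpen {z : ℂ | tau (Θ₂ 1) z ∈ Ω} := hΩo.preimage (continuous_tau _)
  obtain ⟨ε₁, hε₁, hball₁⟩ := Metric.isOpen_iff.1 hA _ (hm₁ 1)
  obtain ⟨ε₂, hε₂, hball₂⟩ := Metric.isOpen_iff.1 hB _ (hm₂ 1)
  refine ⟨min ε₁ ε₂, lt_min hε₁ hε₂, ?_⟩
  intro w hw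
  have hw1 : w ∈ Metric.ball (γ 1) ε₁ :=
    Metric.ball_subset_ball (min_le_left _ _) hw
  have hw2 : w ∈ Metric.ball (γ 1) ε₂ :=
    Metric.ball_subset_ball (min_le_right _ _) hw
  refine ⟨hball₁ hw1, hball₂ hw2, ?_⟩
  set Γ : Path (γ 0) w := (pathOf γ hγc).trans (seg (γ 1) w) with hΓ
  set T₁ : Path (Θ₁ 0) (Θ₁ 1) := (pathOf Θ₁ hΘ₁c).trans (Path.refl (Θ₁ 1)) with hT₁
  set T₂ : Path (Θ₂ 0) (Θ₂ 1) := (pathOf Θ₂ hΘ₂c).trans (Path.refl (Θ₂ 1)) with hT₂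
  have hsph₁ : ∀ t, T₁ t ∈ sph :=
    trans_pair (pathOf γ hγc) (seg (γ 1) w) (pathOf Θ₁ hΘ₁c) (Path.refl (Θ₁ 1))
      (fun _ J => J ∈ sph) (fun t => hΘ₁s t) (fun _ => hΘ₁s 1)
  have hsph₂ : ∀ t, T₂ t ∈ sph :=
    trans_pair (pathOf γ hγc) (seg (γ 1) w) (pathOf Θ₂ hΘ₂c) (Path.refl (Θ₂ 1))
      (fun _ J => J ∈ sph) (fun t => hΘ₂s t) (fun _ => hΘ₂s 1)
  have hmem₁ : ∀ t, tau (T₁ t) (Γ t) ∈ Ω :=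
    trans_pair (pathOf γ hγc) (seg (γ 1) w) (pathOf Θ₁ hΘ₁c) (Path.refl (Θ₁ 1))
      (fun z J => tau J z ∈ Ω) (fun t => hm₁ t)
      (fun t => hball₁ (seg_mem_ball hw1 t))
  have hmem₂ : ∀ t, tau (T₂ t) (Γ t) ∈ Ω :=
    trans_pair (pathOf γ hγc) (seg (γ 1) w) (pathOf Θ₂ hΘ₂c) (Path.refl (Θ₂ 1))
      (fun z J => tau J z ∈ Ω) (fun t => hm₂ t)
      (fun t => hball₂ (seg_mem_ball hw2 t))
  refine ⟨Γ, T₁, T₂, ⟨Γ.continuous, T₁.continuous, hsph₁⟩,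
    ⟨Γ.continuous, T₂.continuous, hsph₂⟩, ?_, hmem₁, hmem₂, ?_, ?_⟩
  · show T₁ 0 = T₂ 0
    rw [T₁.source, T₂.source, h0]
  · rw [show T₁ 1 = Θ₁ 1 from T₁.target, show Γ 1 = w from Γ.target]
  · rw [show T₂ 1 = Θ₂ 1 from T₂.target, show Γ 1 = w from Γ.target]

lemma real_lemma (hΩo : IsOpen Ω) {z : ℂ} (hz : z.im = 0) {J J' : 𝕆}
    (hJ : J ∈ sph) (hJ' : J' ∈ sph) (hmem : tau J z ∈ Ω) :
    ∃ ε > 0, ∀ w ∈ Metric.ball z ε,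
      tau J w ∈ Ω ∧ tau J' w ∈ Ω ∧ CCLConnected Ω (tau J w) (tau J' w) := by
  have hmem' : tau J' z ∈ Ω := by rw [tau_of_im_zero hz J' J]; exact hmem
  obtain ⟨p, hp⟩ := joinedIn_sph hJ hJ'
  have hA : IsOpen {u : ℂ | tau J u ∈ Ω} := hΩo.preimage (continuous_tau _)
  have hB : IsOpen {u : ℂ | tau J' u ∈ Ω} := hΩo.preimage (continuous_tau _)
  obtain ⟨ε₁, hε₁, hball₁⟩ := Metric.isOpen_iff.1 hA _ hmem
  obtain ⟨ε₂, hε₂, hball₂⟩ := Metric.isOpen_iff.1 hB _ hmem'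
  refine ⟨min ε₁ ε₂, lt_min hε₁ hε₂, ?_⟩
  intro w hw
  have hw1 : w ∈ Metric.ball z ε₁ := Metric.ball_subset_ball (min_le_left _ _) hw
  have hw2 : w ∈ Metric.ball z ε₂ := Metric.ball_subset_ball (min_le_right _ _) hw
  refine ⟨hball₁ hw1, hball₂ hw2, ?_⟩
  set Γ : Path z w := (Path.refl z).trans (seg z w) with hΓ
  set T₁ : Path J J := (Path.refl J).trans (Path.refl J) with hT₁
  set T₂ : Path J J' := p.trans (Path.refl J') with hT₂
  have hsph₁ : ∀ t, T₁ t ∈ sph :=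
    trans_pair (Path.refl z) (seg z w) (Path.refl J) (Path.refl J)
      (fun _ K => K ∈ sph) (fun _ => hJ) (fun _ => hJ)
  have hsph₂ : ∀ t, T₂ t ∈ sph :=
    trans_pair (Path.refl z) (seg z w) p (Path.refl J')
      (fun _ K => K ∈ sph) (fun t => hp t) (fun _ => hJ')
  have hmem₁ : ∀ t, tau (T₁ t) (Γ t) ∈ Ω :=
    trans_pair (Path.refl z) (seg z w) (Path.refl J) (Path.refl J)
      (fun u K => tau K u ∈ Ω) (fun _ => hmem)
      (fun t => hball₁ (seg_mem_ball hw1 t))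
  have hmem₂ : ∀ t, tau (T₂ t) (Γ t) ∈ Ω :=
    trans_pair (Path.refl z) (seg z w) p (Path.refl J')
      (fun u K => tau K u ∈ Ω)
      (fun t => by
        show tau (p t) ((Path.refl z) t) ∈ Ω
        rw [Path.refl_apply, tau_of_im_zero hz (p t) J]; exact hmem)
      (fun t => hball₂ (seg_mem_ball hw2 t))
  refine ⟨Γ, T₁, T₂, ⟨Γ.continuous, T₁.continuous, hsph₁⟩,
    ⟨Γ.continuous, T₂.continuous, hsph₂⟩, ?_, hmem₁, hmem₂, ?_, ?_⟩
  · show T₁ 0 = T₂ 0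
    rw [T₁.source, T₂.source]
  · rw [show T₁ 1 = J from T₁.target, show Γ 1 = w from Γ.target]
  · rw [show T₂ 1 = J' from T₂.target, show Γ 1 = w from Γ.target]

/-! ### invariants of CCL equivalence -/

lemma ccl_invariant {x y : 𝕆} (h : CCLEquiv Ω x y) :
    re x = re y ∧ onorm (im x) = onorm (im y) := by
  induction h with
  | rel a b hab =>
    obtain ⟨γ, Θ₁, Θ₂, h₁, h₂, h0, hm1, hm2, he1, he2⟩ := hab
    subst he1; subst he2
    constructor
    · rw [re_tau (h₁.2.2 1), re_tau (h₂.2.2 1)]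
    · rw [im_tau (h₁.2.2 1), im_tau (h₂.2.2 1), onorm_smul, onorm_smul,
        (h₁.2.2 1).1, (h₂.2.2 1).1]
  | refl a => exact ⟨rfl, rfl⟩
  | symm a b _ ih => exact ⟨ih.1.symm, ih.2.symm⟩
  | trans a b c _ _ ih1 ih2 => exact ⟨ih1.1.trans ih2.1, ih1.2.trans ih2.2⟩

lemma ccl_mem_or_eq {x y : 𝕆} (h : CCLEquiv Ω x y) : x = y ∨ (x ∈ Ω ∧ y ∈ Ω) := by
  induction h with
  | rel a b hab =>
    obtain ⟨γ, Θ₁, Θ₂, h₁, h₂, h0, hm1, hm2, he1, he2⟩ := hab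
    exact Or.inr ⟨he1 ▸ hm1 1, he2 ▸ hm2 1⟩
  | refl a => exact Or.inl rfl
  | symm a b _ ih => exact ih.imp Eq.symm And.symm
  | trans a b c _ _ ih1 ih2 =>
    rcases ih1 with rfl | ⟨ha, hb⟩
    · exact ih2
    · rcases ih2 with rfl | ⟨_, hc⟩
      · exact Or.inr ⟨ha, hb⟩
      · exact Or.inr ⟨ha, hc⟩

/-! ### the same-point lemma -/

lemma same_lemma (hΩo : IsOpen Ω) {J J' : 𝕆} {z : ℂ} (hJ : J ∈ sph) (hJ' : J' ∈ sph)
    (hx : tau J z ∈ Ω) (heq : tau J z = tau J' z) :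
    ∃ ε > 0, ∀ w ∈ Metric.ball z ε,
      tau J w ∈ Ω ∧ tau J' w ∈ Ω ∧ CCLEquiv Ω (tau J w) (tau J' w) := by
  by_cases hz : z.im = 0
  · obtain ⟨ε, hε, H⟩ := real_lemma hΩo hz hJ hJ' hx
    exact ⟨ε, hε, fun w hw =>
      ⟨(H w hw).1, (H w hw).2.1, Relation.EqvGen.rel _ _ (H w hw).2.2⟩⟩
  · have hJJ' : J = J' := by
      have := tau_eq_im' hJ hJ' heq
      exact smul_cancel hz this
    subst hJJ'
    have hA : IsOpen {u : ℂ | tau J u ∈ Ω} := hΩo.preimage (continuous_tau _)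
    obtain ⟨ε, hε, hball⟩ := Metric.isOpen_iff.1 hA _ hx
    exact ⟨ε, hε, fun w hw =>
      ⟨hball hw, hball hw, Relation.EqvGen.refl _⟩⟩

/-! ### the key lemma -/

lemma key_aux (hΩo : IsOpen Ω) {x y : 𝕆} (h : CCLEquiv Ω x y) :
    ∀ J J' z, J ∈ sph → J' ∈ sph → x ∈ Ω → tau J z = x → tau J' z = y →
      ∃ ε > 0, ∀ w ∈ Metric.ball z ε,
        tau J w ∈ Ω ∧ tau J' w ∈ Ω ∧ CCLEquiv Ω (tau J w) (tau J' w) := by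
  induction h with
  | rel a b hab =>
    intro J J' z hJ hJ' hxΩ hxa hyb
    obtain ⟨γ, Θ₁, Θ₂, h₁, h₂, h0, hm1, hm2, he1, he2⟩ := hab
    by_cases hz : z.im = 0
    · obtain ⟨ε, hε, H⟩ := real_lemma hΩo hz hJ hJ' (hxa.symm ▸ hxΩ)
      exact ⟨ε, hε, fun w hw =>
        ⟨(H w hw).1, (H w hw).2.1, Relation.EqvGen.rel _ _ (H w hw).2.2⟩⟩
    · have hA : tau (Θ₁ 1) (γ 1) = tau J z := he1.trans hxa.symm
      have hB : tau (Θ₂ 1) (γ 1) = tau J' z := he2.trans hyb.symm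
      have hre : (γ 1).re = z.re := tau_eq_re' (h₁.2.2 1) hJ hA
      have habs : |(γ 1).im| = |z.im| := tau_eq_abs' (h₁.2.2 1) hJ hA
      rcases abs_eq_abs.mp habs with h' | h'
      · have hu : γ 1 = z := Complex.ext hre h'
        have hΘJ : Θ₁ 1 = J := by
          have := tau_eq_im' (h₁.2.2 1) hJ hA
          rw [hu] at this
          exact smul_cancel hz this
        have hΘJ' : Θ₂ 1 = J' := by
          have := tau_eq_im' (h₂.2.2 1) hJ' hB
          rw [hu] at this
          exact smul_cancel hz this
        obtain ⟨ε, hε, H⟩ := extend_lemma hΩo h₁ h₂ h0 hm1 hm2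
        rw [hu, hΘJ, hΘJ'] at H
        exact ⟨ε, hε, fun w hw =>
          ⟨(H w hw).1, (H w hw).2.1, Relation.EqvGen.rel _ _ (H w hw).2.2⟩⟩
      · -- γ 1 = conj z : use the conjugated liftings
        have hu : γ 1 = (starRingEnd ℂ) z := Complex.ext (by simpa using hre) (by simpa using h')
        set γ' : unitInterval → ℂ := fun t => (starRingEnd ℂ) (γ t) with hγ'
        set T₁ : unitInterval → 𝕆 := fun t => -(Θ₁ t) with hT₁
        set T₂ : unitInterval → 𝕆 := fun t => -(Θ₂ t) with hT₂
        have hl₁ : IsCircularLifting γ' T₁ :=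
          ⟨Complex.continuous_conj.comp h₁.1, h₁.2.1.neg, fun t => neg_mem_sph (h₁.2.2 t)⟩
        have hl₂ : IsCircularLifting γ' T₂ :=
          ⟨Complex.continuous_conj.comp h₂.1, h₂.2.1.neg, fun t => neg_mem_sph (h₂.2.2 t)⟩
        have hm1' : ∀ t, tau (T₁ t) (γ' t) ∈ Ω := fun t => by
          rw [hT₁, hγ']; simp only
          rw [tau_neg_conj]; exact hm1 t
        have hm2' : ∀ t, tau (T₂ t) (γ' t) ∈ Ω := fun t => by
          rw [hT₂, hγ']; simp only
          rw [tau_neg_conj]; exact hm2 t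
        have h0' : T₁ 0 = T₂ 0 := by rw [hT₁, hT₂]; simp only [h0]
        obtain ⟨ε, hε, H⟩ := extend_lemma hΩo hl₁ hl₂ h0' hm1' hm2'
        have hγ1 : γ' 1 = z := by
          rw [hγ']; simp only [hu, Complex.conj_conj]
        have hT₁1 : T₁ 1 = J := by
          have := tau_eq_im' (h₁.2.2 1) hJ hA
          rw [hu] at this
          have h2 : z.im • (-(Θ₁ 1)) = z.im • J := by
            rw [smul_neg, ← neg_smul]
            simpa using this
          exact smul_cancel hz h2
        have hT₂1 : T₂ 1 = J' := by
          have := tau_eq_im' (h₂.2.2 1) hJ' hB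
          rw [hu] at this
          have h2 : z.im • (-(Θ₂ 1)) = z.im • J' := by
            rw [smul_neg, ← neg_smul]
            simpa using this
          exact smul_cancel hz h2
        rw [hγ1, hT₁1, hT₂1] at H
        exact ⟨ε, hε, fun w hw =>
          ⟨(H w hw).1, (H w hw).2.1, Relation.EqvGen.rel _ _ (H w hw).2.2⟩⟩
  | refl a =>
    intro J J' z hJ hJ' ha h1 h2
    exact same_lemma hΩo hJ hJ' (h1.symm ▸ ha) (h1.trans h2.symm)
  | symm a b hab ih =>
    intro J J' z hJ hJ' hbΩ hyb hxa
    rcases ccl_mem_or_eq hab with heq | ⟨haΩ, -⟩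
    · exact same_lemma hΩo hJ hJ' (hyb.symm ▸ hbΩ) (hyb.trans (heq.symm.trans hxa.symm))
    · obtain ⟨ε, hε, H⟩ := ih J' J z hJ' hJ haΩ hxa hyb
      exact ⟨ε, hε, fun w hw =>
        ⟨(H w hw).2.1, (H w hw).1, Relation.EqvGen.symm _ _ (H w hw).2.2⟩⟩
  | trans a b c hab hbc ih1 ih2 =>
    intro J J' z hJ hJ' haΩ hxa hzc
    rcases ccl_mem_or_eq hab with heq | ⟨-, hbΩ⟩
    · exact ih2 J J' z hJ hJ' (heq ▸ haΩ) (hxa.trans heq) hzc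
    · have hinv := ccl_invariant hab
      have hreb : re b = z.re := by
        rw [← hinv.1, ← hxa, re_tau hJ]
      have honb : onorm (im b) = |z.im| := by
        rw [← hinv.2, ← hxa, im_tau hJ, onorm_smul, hJ.1, mul_one]
      by_cases hz : z.im = 0
      · have himb : im b = 0 := by
          rw [hz, abs_zero] at honb
          exact onorm_eq_zero.mp honb
        have hba : b = a := by
          have hb : b = re b • 1 + im b := (re_smul_one_add_im b).symm
          have ha' : a = tau J z := hxa.symm
          rw [hb, himb, add_zero, hreb, ha']
          have hima : im (tau J z) = 0 := by
            rw [im_tau hJ, hz, zero_smul]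
          have := (re_smul_one_add_im (tau J z)).symm
          rw [hima, add_zero, re_tau hJ] at this
          exact this.symm
        exact ih2 J J' z hJ hJ' hbΩ (hxa.trans hba.symm) hzc
      · set K : 𝕆 := (z.im)⁻¹ • im b with hK
        have hKs : K ∈ sph := by
          constructor
          · rw [hK, onorm_smul, honb, abs_inv, inv_mul_cancel₀ (abs_ne_zero.mpr hz)]
          · rw [hK, re_smul, re_im, mul_zero]
        have hKb : tau K z = b := by
          rw [tau, hK, smul_smul, mul_inv_cancel₀ hz, one_smul, ← hreb,
            re_smul_one_add_im]
        obtain ⟨ε₁, hε₁, H₁⟩ := ih1 J K z hJ hKs haΩ hxa hKb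
        obtain ⟨ε₂, hε₂, H₂⟩ := ih2 K J' z hKs hJ' hbΩ hKb hzc
        refine ⟨min ε₁ ε₂, lt_min hε₁ hε₂, fun w hw => ?_⟩
        have hw1 := Metric.ball_subset_ball (min_le_left ε₁ ε₂) hw
        have hw2 := Metric.ball_subset_ball (min_le_right ε₁ ε₂) hw
        exact ⟨(H₁ w hw1).1, (H₂ w hw2).2.1,
          Relation.EqvGen.trans _ _ _ (H₁ w hw1).2.2 (H₂ w hw2).2.2⟩

lemma key (hΩo : IsOpen Ω) {J J' : 𝕆} (hJ : J ∈ sph) (hJ' : J' ∈ sph) {z : ℂ}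
    (hx : tau J z ∈ Ω) (h : CCLEquiv Ω (tau J z) (tau J' z)) :
    ∃ ε > 0, ∀ w ∈ Metric.ball z ε,
      tau J w ∈ Ω ∧ tau J' w ∈ Ω ∧ CCLEquiv Ω (tau J w) (tau J' w) :=
  key_aux hΩo h J J' z hJ hJ' hx rfl rfl

end Octonion

open Octonion in
/-- the map `P : D_Ω → ℂ`, `[(z,I)] ↦ z`, is well defined and is a local
homeomorphism; that is, `(D_Ω, P)` is a Riemann domain over `ℂ`. -/
theorem stmt18 (Ω : Set 𝕆) (hΩo : IsOpen Ω) (hΩc : IsConnected Ω) :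
    ∃ P : DOmega Ω → ℂ,
      (∀ p : OHat Ω, P (Quotient.mk (ohatSetoid Ω) p) = p.2.1) ∧ IsLocalHomeomorph P := by
  classical
  set f : OHat Ω → ℂ := fun p => p.2.1 with hf
  have hsound : ∀ (p q : OHat Ω), (ohatSetoid Ω).r p q → f p = f q := fun p q h => h.1
  have hfc : Continuous f := continuous_sigma fun I => continuous_subtype_val
  set P : DOmega Ω → ℂ := Quotient.lift f hsound with hP
  have hPc : Continuous P := hfc.quotient_lift hsound
  have hPmk : ∀ p : OHat Ω, P (Quotient.mk (ohatSetoid Ω) p) = p.2.1 := fun _ => rfl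
  refine ⟨P, hPmk, ?_⟩
  have hslice : ∀ I : 𝕆, IsOpen {w : ℂ | tau I w ∈ Ω} :=
    fun I => hΩo.preimage (continuous_tau I)
  set S : sph → Set (DOmega Ω) := fun I =>
    Set.range (fun z : {z : ℂ // tau I.1 z ∈ Ω} =>
      Quotient.mk (ohatSetoid Ω) ⟨I, z⟩) with hS
  have hSopen : ∀ I, IsOpen (S I) := by
    intro I
    have hq : Topology.IsQuotientMap (Quotient.mk (ohatSetoid Ω) : OHat Ω → DOmega Ω) :=
      isQuotientMap_quot_mk
    rw [← hq.isOpen_preimage, isOpen_sigma_iff]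
    intro J
    rw [Metric.isOpen_iff]
    rintro zs hzs
    obtain ⟨z', hz'⟩ := hzs
    have hrel : z'.1 = zs.1 ∧ CCLEquiv Ω (tau I.1 z'.1) (tau J.1 zs.1) :=
      Quotient.exact hz'
    have heq : CCLEquiv Ω (tau J.1 zs.1) (tau I.1 zs.1) := by
      have h2 := hrel.2
      rw [hrel.1] at h2
      exact Relation.EqvGen.symm _ _ h2
    obtain ⟨ε, hε, H⟩ := key hΩo J.2 I.2 zs.2 heq
    refine ⟨ε, hε, fun w hw => ?_⟩
    obtain ⟨hJw, hIw, hcw⟩ := H w.1 hw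
    exact ⟨⟨w.1, hIw⟩, Quotient.sound ⟨rfl, Relation.EqvGen.symm _ _ hcw⟩⟩
  intro x
  obtain ⟨⟨I, z⟩, rfl⟩ := Quotient.exists_rep x
  refine ⟨⟨⟨⟨P, fun w => if h : tau I.1 w ∈ Ω then Quotient.mk (ohatSetoid Ω) ⟨I, ⟨w, h⟩⟩
      else Quotient.mk (ohatSetoid Ω) ⟨I, z⟩, S I, {w : ℂ | tau I.1 w ∈ Ω},
      ?_, ?_, ?_, ?_⟩, hPc.continuousOn, ?_⟩, hSopen I, hslice I.1⟩, ⟨z, rfl⟩, rfl⟩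
  · rintro _ ⟨zz, rfl⟩
    exact zz.2
  · intro w hw
    refine ⟨⟨w, hw⟩, ?_⟩
    simp only [dif_pos (show tau I.1 w ∈ Ω from hw)]
  · rintro _ ⟨zz, rfl⟩
    simp only [hPmk]
    rw [dif_pos zz.2]
  · intro w hw
    have hw' : tau I.1 w ∈ Ω := hw
    simp only [dif_pos hw']
    exact hPmk _
  · rw [continuousOn_iff_continuous_restrict]
    have hc : Continuous fun (w : {w : ℂ | tau I.1 w ∈ Ω}) =>
        Quotient.mk (ohatSetoid Ω) ⟨I, ⟨w.1, w.2⟩⟩ :=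
      continuous_quotient_mk'.comp
        (continuous_sigmaMk.comp (continuous_subtype_val.subtype_mk _))
    refine hc.congr fun w => ?_
    simp only [Set.restrict_apply]
    rw [dif_pos (show tau I.1 w.1 ∈ Ω from w.2)]
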